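/- Let {X_i}_{i∈𝓘} be a finite collection of symplectic submanifolds of a symplectic manifold (M, ω) such that for every pair i ≠ j the intersection X_i ∩ X_j is orthogonal, i.e. at each intersection point TM decomposes ω-orthogonally as T(X_i∩X_j) ⊕ N X_i ⊕ N X_j. Then the collection is transverse: for every I ⊆ 𝓘 and x ∈ X_I = ⋂_{i∈I} X_i, N_x X_I = ⊕_{i∈I} N_x X_i. -/
import Mathlib


section

variable {V : Type*} [AddCommGroup V] [Module ℝ V] [FiniteDimensional ℝ V]

/-- `V = A ⊕ B ⊕ C` as an `ω`-orthogonal internal direct sum. -/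
def OrthDecomp3 (ω : LinearMap.BilinForm ℝ V) (A B C : Submodule ℝ V) : Prop :=
  A ⊔ B ⊔ C = ⊤ ∧
  Disjoint A (B ⊔ C) ∧ Disjoint B (A ⊔ C) ∧ Disjoint C (A ⊔ B) ∧
  (∀ a ∈ A, ∀ b ∈ B, ω a b = 0) ∧ (∀ a ∈ A, ∀ c ∈ C, ω a c = 0) ∧
  (∀ b ∈ B, ∀ c ∈ C, ω b c = 0)

/-- The orthogonal complement of a supremum is the infimum of the orthogonal complements. -/
lemma aux_orthogonal_iSup {κ : Sort*} (ω : LinearMap.BilinForm ℝ V) (N : κ → Submodule ℝ V) :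
    ω.orthogonal (⨆ k, N k) = ⨅ k, ω.orthogonal (N k) := by
  refine le_antisymm (le_iInf fun k => ω.orthogonal_le (le_iSup N k)) ?_
  intro x hx
  rw [LinearMap.BilinForm.mem_orthogonal_iff]
  intro n hn
  have hker : (⨆ k, N k) ≤ LinearMap.ker (ω.flip x) := by
    refine iSup_le fun k m hm => ?_
    simpa [LinearMap.mem_ker] using (Submodule.mem_iInf _ |>.mp hx k) m hm
  simpa [LinearMap.mem_ker] using hker hn

/-- pointwise, on tangent spaces: let `{X_i}` be symplectic submanifolds of
`(M, ω)` such that every pairwise intersection is orthogonal: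
`TM = T(X_i ∩ X_j) ⊕ N X_i ⊕ N X_j` as an `ω`-orthogonal direct sum, where
`N X_i = (T X_i)^{⊥ω}`.  Then the collection is transverse: for every finite nonempty
`I ⊆ 𝓘` (and each point of `X_I`), `N X_I = ⊕_{i∈I} N X_i`, i.e. the `ω`-orthogonal
complement of `⋂_{i∈I} T X_i` is the (direct) sum of the `ω`-orthogonal complements of the
`T X_i`. -/
theorem stmt13 {ι : Type*} [DecidableEq ι]
    (ω : LinearMap.BilinForm ℝ V) (halt : ω.IsAlt) (hnd : ω.Nondegenerate)
    (T : ι → Submodule ℝ V)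
    -- each `X_i` is symplectic: ω restricts nondegenerately to `T_i`
    (hsymp : ∀ i, (ω.restrict (T i)).Nondegenerate)
    -- pairwise orthogonal intersection
    (horth : ∀ i j, i ≠ j →
      OrthDecomp3 ω (T i ⊓ T j) (ω.orthogonal (T i)) (ω.orthogonal (T j))) :
    ∀ I : Finset ι, I.Nonempty →
      (ω.orthogonal (⨅ i ∈ I, T i) = ⨆ i ∈ I, ω.orthogonal (T i)) ∧
      (∀ i ∈ I, Disjoint (ω.orthogonal (T i))
        (⨆ j ∈ I.erase i, ω.orthogonal (T j))) := by
  have hrefl : ω.IsRefl := halt.isRefl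
  have dbl : ∀ W : Submodule ℝ V, ω.orthogonal (ω.orthogonal W) = W := fun W =>
    LinearMap.BilinForm.orthogonal_orthogonal hnd hrefl W
  -- for `j ≠ i`, the normal space of `X_j` is contained in the tangent space of `X_i`
  have hNle : ∀ i j, j ≠ i → ω.orthogonal (T j) ≤ T i := by
    intro i j hji
    obtain ⟨-, -, -, -, -, -, h⟩ := horth j i hji
    have : ω.orthogonal (T j) ≤ ω.orthogonal (ω.orthogonal (T i)) := by
      intro b hb
      rw [LinearMap.BilinForm.mem_orthogonal_iff]
      intro c hc
      exact hrefl _ _ (h b hb c hc)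
    simpa [dbl] using this
  intro I _
  constructor
  · -- `(⨅ Tᵢ)⊥ = ⨆ Nᵢ` via double orthogonal
    have h1 : (⨅ i ∈ I, T i) = ω.orthogonal (⨆ i ∈ I, ω.orthogonal (T i)) := by
      rw [aux_orthogonal_iSup]
      refine iInf_congr fun i => ?_
      rw [aux_orthogonal_iSup]
      exact iInf_congr fun _ => (dbl (T i)).symm
    rw [h1, dbl]
  · intro i _
    have hle : (⨆ j ∈ I.erase i, ω.orthogonal (T j)) ≤ T i := by
      refine iSup_le fun j => iSup_le fun hj => ?_
      exact hNle i j (Finset.ne_of_mem_erase hj)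
    have hdisj : Disjoint (ω.orthogonal (T i)) (T i) :=
      ((LinearMap.BilinForm.restrict_nondegenerate_iff_isCompl_orthogonal
        hrefl).mp (hsymp i)).disjoint.symm
    exact hdisj.mono_right hle
end
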